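/- Assume f(x) divides g(x), g(x) divides (g^{[q]})^perp(x), and (g^{[q]})^perp(x) divides (f^{[q]})^perp(x). Then the quasi-cyclic code Q := Q_{q^2}(f,g,h) over F_{q^2} satisfies: Q^{perp_h} is contained in Q; the dimension of Q over F_{q^2} is 2n - deg(f(x)) - deg(g(x)); and every nonzero codeword of Q has Hamming weight at least d_{q^2}^e(f,g,h), the minimum of d([g(x)]); d([(x^n-1)/gcd(x^n-1, h(x))]); d([lcm(f(x), g(x)/gcd(g(x), h(x)))]); and d([f(x)]) + d([gcd(h(x)f(x), g(x))]). -/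

import Mathlib

open Polynomial Finset

noncomputable section

variable {F : Type*} [Field F] [DecidableEq F]

/-- The vector in `F^n` corresponding to the residue class of a polynomial
in `F[x]/(x^n-1)`: the coefficients of its canonical representative of degree `< n`. -/
def vecOf (n : ℕ) : F[X] →ₗ[F] (Fin n → F) where
  toFun a := fun i => (a %ₘ (X ^ n - 1)).coeff i
  map_add' a b := by
    funext i
    simp [Polynomial.add_modByMonic]
  map_smul' c a := by
    funext i
    simp [Polynomial.smul_modByMonic]

/-- The quasi-cyclic code `Q_q(f,g,h)`: the `F`-subspace of `F^n × F^n ≃ F^{2n}`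
corresponding to the `R`-submodule of `R²` generated by `([f],[h f])` and `(0,[g])`. -/
def QCcode (n : ℕ) (f g h : F[X]) : Submodule F ((Fin n → F) × (Fin n → F)) where
  carrier := {v | ∃ a b : F[X], v = (vecOf n (a * f), vecOf n (a * h * f + b * g))}
  zero_mem' := ⟨0, 0, by simp; rfl⟩
  add_mem' := by
    rintro v w ⟨a1, b1, rfl⟩ ⟨a2, b2, rfl⟩
    refine ⟨a1 + a2, b1 + b2, ?_⟩
    have h1 : (a1 + a2) * f = a1 * f + a2 * f := by ring
    have h2 : (a1 + a2) * h * f + (b1 + b2) * g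
        = (a1 * h * f + b1 * g) + (a2 * h * f + b2 * g) := by ring
    rw [h1, h2, map_add (vecOf n) (a1 * f) (a2 * f),
      map_add (vecOf n) (a1 * h * f + b1 * g) (a2 * h * f + b2 * g)]
    rfl
  smul_mem' := by
    rintro c v ⟨a, b, rfl⟩
    refine ⟨c • a, c • b, ?_⟩
    have h1 : (c • a) * f = c • (a * f) := smul_mul_assoc c a f
    have h2 : (c • a) * h * f + (c • b) * g = c • (a * h * f + b * g) := by
      rw [smul_add, smul_mul_assoc, smul_mul_assoc, smul_mul_assoc]
    rw [h1, h2, map_smul, map_smul]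
    rfl

/-- Hamming weight of a vector. -/
def hWt {n : ℕ} (x : Fin n → F) : ℕ := Nat.card {i : Fin n // x i ≠ 0}

/-- Hamming weight of a vector of `F^{2n}` presented as a pair. -/
def hWt2 {n : ℕ} (v : (Fin n → F) × (Fin n → F)) : ℕ := hWt v.1 + hWt v.2

/-- Symplectic weight. -/
def sWt {n : ℕ} (v : (Fin n → F) × (Fin n → F)) : ℕ :=
  Nat.card {i : Fin n // (v.1 i, v.2 i) ≠ (0, 0)}

/-- Euclidean inner product on `F^n`. -/
def eInn {n : ℕ} (x y : Fin n → F) : F := ∑ i, x i * y i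

/-- Euclidean inner product on `F^{2n}`. -/
def eInn2 {n : ℕ} (x y : (Fin n → F) × (Fin n → F)) : F := eInn x.1 y.1 + eInn x.2 y.2

/-- Symplectic inner product on `F^{2n}`. -/
def sInn {n : ℕ} (x y : (Fin n → F) × (Fin n → F)) : F :=
  ∑ i, (x.1 i * y.2 i - x.2 i * y.1 i)

/-- Hermitian inner product on `F^{2n}` (with respect to `x ↦ x^q`). -/
def hInn2 (q : ℕ) {n : ℕ} (x y : (Fin n → F) × (Fin n → F)) : F :=
  (∑ i, x.1 i ^ q * y.1 i) + ∑ i, x.2 i ^ q * y.2 i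

def sDualSet {n : ℕ} (C : Set ((Fin n → F) × (Fin n → F))) : Set ((Fin n → F) × (Fin n → F)) :=
  {x | ∀ y ∈ C, sInn x y = 0}

def eDualSet {n : ℕ} (C : Set ((Fin n → F) × (Fin n → F))) : Set ((Fin n → F) × (Fin n → F)) :=
  {x | ∀ y ∈ C, eInn2 x y = 0}

def hDualSet (q : ℕ) {n : ℕ} (C : Set ((Fin n → F) × (Fin n → F))) :
    Set ((Fin n → F) × (Fin n → F)) :=
  {x | ∀ y ∈ C, hInn2 q x y = 0}

/-- `x^n f(1/x)` for `f` of degree `< n`. -/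
def barPoly (n : ℕ) (f : F[X]) : F[X] := ∑ i ∈ f.support, C (f.coeff i) * X ^ (n - i)

/-- `f^⊥ = x^{deg f'} f'(1/x)` where `f f' = x^n - 1`. -/
def perpPoly (n : ℕ) (f : F[X]) : F[X] := ((X ^ n - 1) /ₘ f).reverse

/-- coefficientwise `q`-th power. -/
def polyQ (q : ℕ) (f : F[X]) : F[X] := ∑ i ∈ f.support, C (f.coeff i ^ q) * X ^ i

/-- minimum Hamming weight of the cyclic code generated by `[u]`. -/
def cycDist (n : ℕ) (u : F[X]) : ℕ :=
  sInf {w | ∃ a : F[X], vecOf n (a * u) ≠ 0 ∧ w = hWt (vecOf n (a * u))}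

/-- The general QC set generated by `([u₁],[v₁])` and `([u₂],[v₂])`. -/
def QCspan (n : ℕ) (u₁ v₁ u₂ v₂ : F[X]) : Set ((Fin n → F) × (Fin n → F)) :=
  {w | ∃ a b : F[X], w = (vecOf n (a * u₁ + b * u₂), vecOf n (a * v₁ + b * v₂))}

/-- The lower bound `d_q(f,g,h)` for the symplectic weight (a rational number). -/
def dSymp (q n : ℕ) (f g h : F[X]) : ℚ :=
  min (min (min (cycDist n g : ℚ)
    (cycDist n ((X ^ n - 1) / GCDMonoid.gcd (X ^ n - 1) h) : ℚ))
    (cycDist n (GCDMonoid.lcm f (g / GCDMonoid.gcd g h)) : ℚ))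
    ((cycDist n f + cycDist n (GCDMonoid.gcd (h * f) g) + ((q : ℚ) - 1) * cycDist n (GCDMonoid.gcd f g)) / q)

/-- The lower bound `d_q^e(f,g,h)` for the minimum distance. -/
def dEucl (n : ℕ) (f g h : F[X]) : ℕ :=
  min (min (min (cycDist n g)
    (cycDist n ((X ^ n - 1) / GCDMonoid.gcd (X ^ n - 1) h)))
    (cycDist n (GCDMonoid.lcm f (g / GCDMonoid.gcd g h))))
    (cycDist n f + cycDist n (GCDMonoid.gcd (h * f) g))


section StmtAux
set_option linter.unusedSectionVars false
set_option linter.unusedVariables false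

variable {F : Type*} [Field F] [DecidableEq F]

lemma monicN {n : ℕ} (hn : 0 < n) : (X ^ n - 1 : F[X]).Monic := by
  simpa using monic_X_pow_sub_C (1 : F) hn.ne'

lemma degreeN {n : ℕ} (hn : 0 < n) : (X ^ n - 1 : F[X]).degree = n := by
  simpa using degree_X_pow_sub_C hn (1 : F)

lemma natDegreeN {n : ℕ} (hn : 0 < n) : (X ^ n - 1 : F[X]).natDegree = n := by
  simpa using (natDegree_X_pow_sub_C (n := n) (r := (1:F)))

lemma Nne {n : ℕ} (hn : 0 < n) : (X ^ n - 1 : F[X]) ≠ 0 := (monicN hn).ne_zero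

lemma modCongr {n : ℕ} (hn : 0 < n) {a b : F[X]} (hab : (X ^ n - 1) ∣ (a - b)) :
    a %ₘ (X ^ n - 1) = b %ₘ (X ^ n - 1) := by
  have h0 : (a - b) %ₘ (X ^ n - 1 : F[X]) = 0 :=
    (modByMonic_eq_zero_iff_dvd (monicN hn)).2 hab
  rw [sub_modByMonic] at h0
  exact sub_eq_zero.mp h0

lemma vecOf_apply {n : ℕ} (a : F[X]) (i : Fin n) :
    vecOf n a i = (a %ₘ (X ^ n - 1)).coeff i := rfl

lemma natDegree_mod_le {n : ℕ} (hn : 0 < n) (a : F[X]) :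
    (a %ₘ (X ^ n - 1)).natDegree ≤ n - 1 := by
  by_cases h0 : a %ₘ (X ^ n - 1 : F[X]) = 0
  · simp [h0]
  · have hd : (a %ₘ (X ^ n - 1)).degree < (n : WithBot ℕ) := by
      have := degree_modByMonic_lt a (monicN hn)
      rwa [degreeN hn] at this
    have := (natDegree_lt_iff_degree_lt h0).2 hd
    omega

lemma vecOf_eq_zero {n : ℕ} (hn : 0 < n) {a : F[X]} :
    vecOf n a = 0 ↔ (X ^ n - 1) ∣ a := by
  rw [← modByMonic_eq_zero_iff_dvd (monicN hn)]
  constructor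
  · intro hz
    ext i
    by_cases hi : i < n
    · have := congrFun hz ⟨i, hi⟩
      simpa [vecOf_apply] using this
    · refine coeff_eq_zero_of_natDegree_lt ?_
      have := natDegree_mod_le hn a
      omega
  · intro hz
    funext i
    simp [vecOf_apply, hz]

lemma vecOf_congr {n : ℕ} (hn : 0 < n) {a b : F[X]} (hab : (X ^ n - 1) ∣ (a - b)) :
    vecOf n a = vecOf n b := by
  funext i
  simp [vecOf_apply, modCongr hn hab]

lemma mul_divByMonic_cancel {c p : F[X]} (hc : c.Monic) (hdvd : c ∣ p) :
    c * (p /ₘ c) = p := by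
  conv_rhs => rw [← modByMonic_add_div p c]
  rw [(modByMonic_eq_zero_iff_dvd hc).2 hdvd, zero_add]

/-- polynomial with given coefficient vector -/
def polyOfVec {n : ℕ} (z : Fin n → F) : F[X] := ∑ i : Fin n, C (z i) * X ^ (i : ℕ)

lemma coeff_polyOfVec {n : ℕ} (z : Fin n → F) (j : ℕ) :
    (polyOfVec z).coeff j = if hj : j < n then z ⟨j, hj⟩ else 0 := by
  unfold polyOfVec
  rw [finset_sum_coeff]
  simp only [C_mul_X_pow_eq_monomial, coeff_monomial]
  split
  case isTrue hj =>
    rw [Finset.sum_eq_single (⟨j, hj⟩ : Fin n)]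
    · simp
    · intro b _ hb
      rw [if_neg]
      intro hbj
      exact hb (Fin.ext hbj)
    · simp
  case isFalse hj =>
    apply Finset.sum_eq_zero
    intro i _
    rw [if_neg]
    intro hij
    exact hj (hij ▸ i.isLt)

lemma natDegree_polyOfVec_le {n : ℕ} (hn : 0 < n) (z : Fin n → F) :
    (polyOfVec z).natDegree ≤ n - 1 := by
  apply natDegree_le_iff_coeff_eq_zero.2
  intro m hm
  rw [coeff_polyOfVec, dif_neg]
  omega

lemma degree_polyOfVec_lt {n : ℕ} (hn : 0 < n) (z : Fin n → F) :
    (polyOfVec z).degree < (n : WithBot ℕ) := by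
  by_cases h0 : polyOfVec z = 0
  · rw [h0, degree_zero]
    exact WithBot.bot_lt_coe n
  · rw [← natDegree_lt_iff_degree_lt h0]
    have := natDegree_polyOfVec_le hn z
    omega

lemma vecOf_polyOfVec {n : ℕ} (hn : 0 < n) (z : Fin n → F) :
    vecOf n (polyOfVec z) = z := by
  funext i
  rw [vecOf_apply, (modByMonic_eq_self_iff (monicN hn)).2
    (by rw [degreeN hn]; exact degree_polyOfVec_lt hn z), coeff_polyOfVec, dif_pos i.isLt]

lemma map_polyOfVec {n : ℕ} (φ : F →+* F) (z : Fin n → F) :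
    (polyOfVec z).map φ = polyOfVec (fun i => φ (z i)) := by
  unfold polyOfVec
  rw [Polynomial.map_sum]
  congr 1
  funext i
  rw [Polynomial.map_mul, Polynomial.map_pow, map_C, map_X]

lemma conv {n : ℕ} (hn : 0 < n) (z : Fin n → F) (P : F[X]) :
    (P * reflect (n - 1) (polyOfVec z)).coeff (n - 1) = ∑ i : Fin n, z i * P.coeff i := by
  rw [coeff_mul, Finset.Nat.sum_antidiagonal_eq_sum_range_succ_mk,
    (by omega : (n - 1).succ = n), ← Fin.sum_univ_eq_sum_range]
  apply Finset.sum_congr rfl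
  intro i _
  rw [coeff_reflect, revAt_le (by omega : n - 1 - (i : ℕ) ≤ n - 1), coeff_polyOfVec]
  have hi : n - 1 - (n - 1 - (i : ℕ)) = (i : ℕ) := by omega
  rw [hi, dif_pos i.isLt, Fin.eta, mul_comm]

lemma modc {n : ℕ} (hn : 0 < n) (c P : F[X]) (hP : P.natDegree ≤ n - 1) :
    ((c %ₘ (X ^ n - 1)) * P).coeff (n - 1) = ((c * P) %ₘ (X ^ n - 1)).coeff (n - 1) := by
  have h1 : (c * P) %ₘ (X ^ n - 1 : F[X]) = ((c %ₘ (X ^ n - 1)) * P) %ₘ (X ^ n - 1) := by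
    apply modCongr hn
    refine ⟨(c /ₘ (X ^ n - 1)) * P, ?_⟩
    have := modByMonic_add_div c (X ^ n - 1)
    linear_combination -P * this
  rw [h1]
  set D : F[X] := (c %ₘ (X ^ n - 1 : F[X])) * P with hD
  have hDdeg : D.natDegree ≤ (n - 1) + (n - 1) :=
    natDegree_mul_le.trans (add_le_add (natDegree_mod_le hn c) hP)
  have h2 : D %ₘ (X ^ n - 1 : F[X]) = D - (X ^ n - 1) * (D /ₘ (X ^ n - 1)) := by
    rw [eq_sub_iff_add_eq, modByMonic_add_div D (X ^ n - 1)]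
  rw [h2, coeff_sub]
  have h3 : ((X ^ n - 1 : F[X]) * (D /ₘ (X ^ n - 1))).coeff (n - 1) = 0 := by
    rw [sub_mul, one_mul, coeff_sub, mul_comm, coeff_mul_X_pow', if_neg (by omega)]
    simp only [zero_sub, neg_eq_zero]
    by_cases hQ : D /ₘ (X ^ n - 1 : F[X]) = 0
    · simp [hQ]
    · have hDne : D ≠ 0 := by
        intro h0
        rw [h0] at hQ
        simp at hQ
      have hnD : n ≤ D.natDegree := by
        by_contra hlt
        apply hQ
        rw [divByMonic_eq_zero_iff (monicN hn), degreeN hn]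
        rw [← natDegree_lt_iff_degree_lt hDne]
        omega
      apply coeff_eq_zero_of_natDegree_lt
      rw [natDegree_divByMonic D (monicN hn), natDegreeN hn]
      omega
  rw [h3, sub_zero]

lemma key {n : ℕ} (hn : 0 < n) {w : F[X]}
    (hw : ∀ a : F[X], ((a * w) %ₘ (X ^ n - 1)).coeff (n - 1) = 0) : (X ^ n - 1) ∣ w := by
  rw [← modByMonic_eq_zero_iff_dvd (monicN hn)]
  by_contra hm
  set m : F[X] := w %ₘ (X ^ n - 1) with hmdef
  set N : F[X] := X ^ n - 1 with hN
  have hdm : m.natDegree ≤ n - 1 := natDegree_mod_le hn w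
  have hcontra := hw (X ^ (n - 1 - m.natDegree))
  have e0 : (X ^ (n - 1 - m.natDegree) * w) %ₘ N = (X ^ (n - 1 - m.natDegree) * m) %ₘ N := by
    apply modCongr hn
    refine ⟨X ^ (n - 1 - m.natDegree) * (w /ₘ N), ?_⟩
    have := modByMonic_add_div w (X ^ n - 1)
    linear_combination -X ^ (n - 1 - m.natDegree) * this
  have e1 : (X ^ (n - 1 - m.natDegree) * m) %ₘ N = X ^ (n - 1 - m.natDegree) * m := by
    apply (modByMonic_eq_self_iff (monicN hn)).2
    rw [degreeN hn]
    have hne : X ^ (n - 1 - m.natDegree) * m ≠ 0 := by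
      exact mul_ne_zero (pow_ne_zero _ X_ne_zero) hm
    rw [← natDegree_lt_iff_degree_lt hne]
    have : (X ^ (n - 1 - m.natDegree) * m).natDegree ≤ (n - 1 - m.natDegree) + m.natDegree :=
      natDegree_mul_le.trans (by rw [natDegree_X_pow])
    omega
  rw [e0, e1] at hcontra
  have e2 : (X ^ (n - 1 - m.natDegree) * m).coeff (n - 1) = m.coeff m.natDegree := by
    have hcp := coeff_X_pow_mul m (n - 1 - m.natDegree) m.natDegree
    rwa [(by omega : m.natDegree + (n - 1 - m.natDegree) = n - 1)] at hcp
  rw [e2] at hcontra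
  exact hm (leadingCoeff_eq_zero.1 hcontra)

lemma reflect_reflect' (m : ℕ) (p : F[X]) : reflect m (reflect m p) = p := by
  ext i
  rw [coeff_reflect, coeff_reflect, revAt_invol]

lemma natDegree_reflect_le {m : ℕ} {p : F[X]} (hp : p.natDegree ≤ m) :
    (reflect m p).natDegree ≤ m := by
  apply natDegree_le_iff_coeff_eq_zero.2
  intro i hi
  rw [coeff_reflect]
  apply coeff_eq_zero_of_natDegree_lt
  have : revAt m i = i := by
    rw [← revAtFun_eq]
    unfold revAtFun
    rw [if_neg (by omega)]
  omega

lemma reflect_map' (φ : F →+* F) (m : ℕ) (p : F[X]) :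
    (reflect m p).map φ = reflect m (p.map φ) := by
  ext i
  rw [coeff_map, coeff_reflect, coeff_reflect, coeff_map]

lemma reflectN {n : ℕ} (hn : 0 < n) : reflect n (X ^ n - 1 : F[X]) = -(X ^ n - 1) := by
  rw [reflect_sub]
  have h1 : reflect n ((X : F[X]) ^ n) = X ^ 0 := by
    rw [reflect_monomial, revAt_le le_rfl, Nat.sub_self]
  have h2 : reflect n (1 : F[X]) = X ^ n := by
    rw [← pow_zero (X : F[X]), reflect_monomial, revAt_le (Nat.zero_le n), Nat.sub_zero]
  rw [h1, h2]
  ring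

lemma refl_dvd {n : ℕ} (hn : 0 < n) {c d : F[X]} (hc : c ≠ 0) {m : ℕ}
    (hd : d.natDegree ≤ m) (hdvd : (X ^ n - 1) ∣ c * d) :
    (X ^ n - 1) ∣ reverse c * reflect m d := by
  by_cases hd0 : d = 0
  · simp [hd0]
  obtain ⟨s, hs⟩ := hdvd
  have hs0 : s ≠ 0 := by
    rintro rfl
    rw [mul_zero] at hs
    exact (mul_ne_zero hc hd0) hs
  have hdeg : c.natDegree + d.natDegree = n + s.natDegree := by
    rw [← natDegree_mul hc hd0, hs, natDegree_mul (Nne hn) hs0, natDegreeN hn]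
  have hsle : s.natDegree ≤ c.natDegree + m - n := by omega
  have e1 : reflect (c.natDegree + m) (c * d) = reverse c * reflect m d :=
    reflect_mul c d le_rfl hd
  have e2 : reflect (c.natDegree + m) ((X ^ n - 1 : F[X]) * s)
      = -(X ^ n - 1) * reflect (c.natDegree + m - n) s := by
    rw [(by omega : c.natDegree + m = n + (c.natDegree + m - n)),
      reflect_mul (X ^ n - 1 : F[X]) s (natDegreeN hn).le hsle, reflectN hn,
      (show n + (c.natDegree + m - n) - n = c.natDegree + m - n by omega)]
  refine ⟨-reflect (c.natDegree + m - n) s, ?_⟩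
  rw [← e1, hs, e2]
  ring

lemma reverseN {n : ℕ} (hn : 0 < n) : (X ^ n - 1 : F[X]).reverse = -(X ^ n - 1) := by
  rw [Polynomial.reverse, natDegreeN hn, reflectN hn]

lemma mul_perp {n : ℕ} (hn : 0 < n) {c : F[X]} (hc : c.Monic) (hcd : c ∣ (X ^ n - 1)) :
    reverse c * perpPoly n c = -(X ^ n - 1) := by
  have hmul : c * ((X ^ n - 1) /ₘ c) = X ^ n - 1 := mul_divByMonic_cancel hc hcd
  have hmonic' : ((X ^ n - 1 : F[X]) /ₘ c).Monic :=
    hc.of_mul_monic_left (by rw [hmul]; exact monicN hn)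
  unfold perpPoly
  rw [← reverse_mul (by rw [hc.leadingCoeff, hmonic'.leadingCoeff, mul_one]; exact one_ne_zero),
    hmul, reverseN hn]

lemma pcancel {n : ℕ} (hn : 0 < n) {c W : F[X]} (hc : c.Monic) (hcd : c ∣ (X ^ n - 1))
    (hdvd : (X ^ n - 1) ∣ reverse c * W) : perpPoly n c ∣ W := by
  obtain ⟨s, hs⟩ := hdvd
  have hrc : reverse c ≠ 0 := fun h0 => hc.ne_zero (reverse_eq_zero.1 h0)
  refine ⟨-s, ?_⟩
  apply mul_left_cancel₀ hrc
  rw [hs]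
  linear_combination s * mul_perp hn hc hcd

lemma polyQ_eq_map {q : ℕ} (hq : q ≠ 0) (φ : F →+* F) (hφ : ∀ x, φ x = x ^ q) (f : F[X]) :
    polyQ q f = f.map φ := by
  unfold polyQ
  ext i
  rw [finset_sum_coeff, coeff_map, hφ]
  simp only [C_mul_X_pow_eq_monomial, coeff_monomial]
  rw [Finset.sum_ite_eq' f.support i (fun j => f.coeff j ^ q)]
  split
  · rfl
  · rw [Polynomial.notMem_support_iff.1 (by assumption), zero_pow hq]

lemma hWt_zero {n : ℕ} : hWt (0 : Fin n → F) = 0 := by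
  have : IsEmpty {i : Fin n // (0 : Fin n → F) i ≠ 0} := ⟨fun ⟨_, hi⟩ => hi rfl⟩
  exact Nat.card_of_isEmpty

lemma cycDist_le {n : ℕ} {u c : F[X]} (hu : u ∣ c) (hc : vecOf n c ≠ 0) :
    cycDist n u ≤ hWt (vecOf n c) := by
  obtain ⟨e, rfl⟩ := hu
  exact Nat.sInf_le ⟨e, by rwa [mul_comm], by rw [mul_comm]⟩

/-- The parametrization of the quasi-cyclic code by polynomial pairs of bounded degree. -/
def qcMap (n : ℕ) (f g h : F[X]) :
    ((Polynomial.degreeLT F (n - f.natDegree)) × (Polynomial.degreeLT F (n - g.natDegree))) →ₗ[F]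
      ((Fin n → F) × (Fin n → F)) :=
  LinearMap.prod
    ((vecOf n).comp ((LinearMap.mulRight F f).comp
      ((Submodule.subtype _).comp (LinearMap.fst F _ _))))
    ((vecOf n).comp
      ((LinearMap.mulRight F (h * f)).comp
        ((Submodule.subtype _).comp (LinearMap.fst F _ _)) +
       (LinearMap.mulRight F g).comp ((Submodule.subtype _).comp (LinearMap.snd F _ _))))

lemma qcMap_apply {n : ℕ} (f g h : F[X])
    (ab : (Polynomial.degreeLT F (n - f.natDegree)) × (Polynomial.degreeLT F (n - g.natDegree))) :
    qcMap n f g h ab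
      = (vecOf n ((ab.1 : F[X]) * f),
         vecOf n ((ab.1 : F[X]) * (h * f) + (ab.2 : F[X]) * g)) := by
  simp only [qcMap, LinearMap.prod_apply, LinearMap.comp_apply, LinearMap.add_apply,
    LinearMap.fst_apply, LinearMap.snd_apply, Submodule.coe_subtype, LinearMap.mulRight_apply,
    Function.prod_apply, map_add]

lemma qcMap_inj {n : ℕ} (hn : 0 < n) {f g h : F[X]} (hf : f.Monic) (hg : g.Monic)
    (hfd : f.degree < n) (hgd : g.degree < n) :
    Function.Injective (qcMap n f g h) := by
  refine (injective_iff_map_eq_zero _).2 ?_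
  rintro ⟨⟨a, ha⟩, ⟨b, hb⟩⟩ hab
  rw [qcMap_apply] at hab
  have h1 : vecOf n (a * f) = 0 := congrArg Prod.fst hab
  have hdlt : ∀ (c u : F[X]), u.Monic → u.degree < n → c ∈ Polynomial.degreeLT F (n - u.natDegree) →
      (c * u).degree < ((X ^ n - 1 : F[X])).degree := by
    intro c u hu hud hc
    rw [degreeN hn]
    by_cases hc0 : c = 0
    · rw [hc0, zero_mul, degree_zero]
      exact WithBot.bot_lt_coe n
    · rw [degree_mul, degree_eq_natDegree hc0, degree_eq_natDegree hu.ne_zero,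
        ← Nat.cast_add, Nat.cast_lt]
      have h2 := Polynomial.mem_degreeLT.1 hc
      rw [degree_eq_natDegree hc0, Nat.cast_lt] at h2
      have h3 : u.natDegree < n := by
        rw [← Nat.cast_lt (α := WithBot ℕ), ← degree_eq_natDegree hu.ne_zero]
        exact hud
      omega
  have haf : a = 0 := by
    have h0 : a * f = 0 := eq_zero_of_dvd_of_degree_lt ((vecOf_eq_zero hn).1 h1)
      (hdlt a f hf hfd ha)
    rcases mul_eq_zero.1 h0 with h | h
    · exact h
    · exact absurd h hf.ne_zero
  have h2 : vecOf n (a * (h * f) + b * g) = 0 := congrArg Prod.snd hab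
  rw [haf, zero_mul, zero_add] at h2
  have hbg : b = 0 := by
    have h0 : b * g = 0 := eq_zero_of_dvd_of_degree_lt ((vecOf_eq_zero hn).1 h2)
      (hdlt b g hg hgd hb)
    rcases mul_eq_zero.1 h0 with h | h
    · exact h
    · exact absurd h hg.ne_zero
  refine Prod.ext (Subtype.ext ?_) (Subtype.ext ?_) <;> simpa [haf, hbg]

lemma qcMap_range {n : ℕ} (hn : 0 < n) {f g h : F[X]} (hf : f.Monic) (hg : g.Monic)
    (hfdvd : f ∣ X ^ n - 1) (hgdvd : g ∣ X ^ n - 1) :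
    LinearMap.range (qcMap n f g h) = QCcode n f g h := by
  have hff' : f * ((X ^ n - 1) /ₘ f) = X ^ n - 1 := mul_divByMonic_cancel hf hfdvd
  have hgg' : g * ((X ^ n - 1) /ₘ g) = X ^ n - 1 := mul_divByMonic_cancel hg hgdvd
  have hf'm : ((X ^ n - 1 : F[X]) /ₘ f).Monic :=
    hf.of_mul_monic_left (by rw [hff']; exact monicN hn)
  have hg'm : ((X ^ n - 1 : F[X]) /ₘ g).Monic :=
    hg.of_mul_monic_left (by rw [hgg']; exact monicN hn)
  have hdf' : ((X ^ n - 1 : F[X]) /ₘ f).natDegree = n - f.natDegree := by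
    rw [natDegree_divByMonic _ hf, natDegreeN hn]
  have hdg' : ((X ^ n - 1 : F[X]) /ₘ g).natDegree = n - g.natDegree := by
    rw [natDegree_divByMonic _ hg, natDegreeN hn]
  apply le_antisymm
  · rintro v ⟨⟨⟨a, ha⟩, ⟨b, hb⟩⟩, rfl⟩
    exact ⟨a, b, by rw [qcMap_apply, mul_assoc]⟩
  · rintro v ⟨a, b, rfl⟩
    set a' := a %ₘ ((X ^ n - 1) /ₘ f) with ha'def
    set qa := a /ₘ ((X ^ n - 1) /ₘ f) with hqadef
    set b2 := b + qa * h * ((X ^ n - 1) /ₘ g) with hb2def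
    set b' := b2 %ₘ ((X ^ n - 1) /ₘ g) with hb'def
    set qb := b2 /ₘ ((X ^ n - 1) /ₘ g) with hqbdef
    have hadd_a : a' + ((X ^ n - 1) /ₘ f) * qa = a := modByMonic_add_div a ((X ^ n - 1) /ₘ f)
    have hadd_b : b' + ((X ^ n - 1) /ₘ g) * qb = b2 := modByMonic_add_div b2 ((X ^ n - 1) /ₘ g)
    have hamem : a' ∈ Polynomial.degreeLT F (n - f.natDegree) := by
      rw [Polynomial.mem_degreeLT, ← hdf', ← degree_eq_natDegree hf'm.ne_zero]
      exact degree_modByMonic_lt a hf'm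
    have hbmem : b' ∈ Polynomial.degreeLT F (n - g.natDegree) := by
      rw [Polynomial.mem_degreeLT, ← hdg', ← degree_eq_natDegree hg'm.ne_zero]
      exact degree_modByMonic_lt b2 hg'm
    refine ⟨⟨⟨a', hamem⟩, ⟨b', hbmem⟩⟩, ?_⟩
    rw [qcMap_apply]
    refine Prod.ext ?_ ?_
    · show vecOf n (a' * f) = vecOf n (a * f)
      apply vecOf_congr hn
      refine ⟨-qa, ?_⟩
      linear_combination f * hadd_a - qa * hff'
    · show vecOf n (a' * (h * f) + b' * g) = vecOf n (a * h * f + b * g)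
      apply vecOf_congr hn
      refine ⟨-qb, ?_⟩
      linear_combination (h * f) * hadd_a + g * hadd_b + g * hb2def + (-(qa * h)) * hff' + (qa * h - qb) * hgg'

lemma finrank_QCcode {n : ℕ} (hn : 0 < n) {f g h : F[X]} (hf : f.Monic) (hg : g.Monic)
    (hfd : f.degree < n) (hgd : g.degree < n)
    (hfdvd : f ∣ X ^ n - 1) (hgdvd : g ∣ X ^ n - 1) :
    Module.finrank F (QCcode n f g h) = 2 * n - f.natDegree - g.natDegree := by
  haveI h1 : Module.Finite F (Polynomial.degreeLT F (n - f.natDegree)) :=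
    Module.Finite.equiv (Polynomial.degreeLTEquiv F _).symm
  haveI h2 : Module.Finite F (Polynomial.degreeLT F (n - g.natDegree)) :=
    Module.Finite.equiv (Polynomial.degreeLTEquiv F _).symm
  rw [← qcMap_range hn hf hg hfdvd hgdvd,
    LinearMap.finrank_range_of_inj (qcMap_inj hn hf hg hfd hgd),
    Module.finrank_prod, (Polynomial.degreeLTEquiv F _).finrank_eq,
    (Polynomial.degreeLTEquiv F _).finrank_eq, Module.finrank_fin_fun, Module.finrank_fin_fun]
  have h3 : f.natDegree < n := by
    rw [← Nat.cast_lt (α := WithBot ℕ), ← degree_eq_natDegree hf.ne_zero]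
    exact hfd
  have h4 : g.natDegree < n := by
    rw [← Nat.cast_lt (α := WithBot ℕ), ← degree_eq_natDegree hg.ne_zero]
    exact hgd
  omega

end StmtAux

/-- if `f ∣ g ∣ (g^[q])^⊥ ∣ (f^[q])^⊥`, then `Q_{q^2}(f,g,h)` contains its
Hermitian dual, has dimension `2n - deg f - deg g` over `F_{q^2}`, and minimum Hamming
weight at least `d_{q^2}^e(f,g,h)`. -/
theorem stmt18 [Fintype F] (p r q n : ℕ) (hp : p.Prime) (hr : 0 < r) (hq : q = p ^ r)
    (hF : Fintype.card F = q ^ 2) (hn : 0 < n) (f g h : F[X])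
    (hf : f.Monic) (hg : g.Monic) (hh : h.Monic)
    (hfd : f.degree < n) (hgd : g.degree < n) (hhd : h.degree < n)
    (hfdvd : f ∣ X ^ n - 1) (hgdvd : g ∣ X ^ n - 1)
    (hd1 : f ∣ g) (hd2 : g ∣ perpPoly n (polyQ q g))
    (hd3 : perpPoly n (polyQ q g) ∣ perpPoly n (polyQ q f)) :
    hDualSet q (QCcode n f g h : Set ((Fin n → F) × (Fin n → F))) ⊆
        (QCcode n f g h : Set ((Fin n → F) × (Fin n → F))) ∧
      Module.finrank F (QCcode n f g h) = 2 * n - f.natDegree - g.natDegree ∧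
      ∀ v ∈ QCcode n f g h, v ≠ 0 → hWt2 v ≥ dEucl n f g h := by
  refine ⟨?_, finrank_QCcode hn hf hg hfd hgd hfdvd hgdvd, ?_⟩
  · -- Part 1: Hermitian dual containment
    intro x hx
    have hq0 : q ≠ 0 := by rw [hq]; exact pow_ne_zero _ hp.ne_zero
    haveI hcr := ringChar.charP F
    haveI hcharp : CharP F p := by
      obtain ⟨k, hk1, hk2⟩ := FiniteField.card F (ringChar F)
      have hdvdp : p ∣ Fintype.card F := by
        rw [hF, hq, ← pow_mul]
        exact dvd_pow_self p (by omega)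
      have hpc : p = ringChar F := by
        have h1 : p ∣ (ringChar F) ^ (k : ℕ) := hk2 ▸ hdvdp
        exact (Nat.prime_dvd_prime_iff_eq hp hk1).1 (hp.dvd_of_dvd_pow h1)
      rwa [hpc]
    haveI : Fact p.Prime := ⟨hp⟩
    set φ : F →+* F := iterateFrobenius F p r with hφdef
    have hφ : ∀ y : F, φ y = y ^ q := fun y => by
      rw [hφdef, iterateFrobenius_def, hq]
    have hφφ : ∀ y : F, φ (φ y) = y := fun y => by
      rw [hφ, hφ, ← pow_mul, ← pow_two, ← hF]
      exact FiniteField.pow_card y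
    set Zu : F[X] := reflect (n - 1) (polyOfVec (fun i => x.1 i ^ q)) with hZu
    set Zv : F[X] := reflect (n - 1) (polyOfVec (fun i => x.2 i ^ q)) with hZv
    have hZud : Zu.natDegree ≤ n - 1 :=
      natDegree_reflect_le (natDegree_polyOfVec_le hn _)
    have hZvd : Zv.natDegree ≤ n - 1 :=
      natDegree_reflect_le (natDegree_polyOfVec_le hn _)
    have hcond : ∀ a b : F[X],
        (((a * (f * Zu + h * f * Zv) + b * (g * Zv)) %ₘ (X ^ n - 1)).coeff (n - 1)) = 0 := by
      intro a b
      have hy := hx (vecOf n (a * f), vecOf n (a * h * f + b * g)) ⟨a, b, rfl⟩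
      simp only [hInn2] at hy
      have e1 : ∑ i, x.1 i ^ q * (vecOf n (a * f)) i
          = (((a * f) * Zu) %ₘ (X ^ n - 1)).coeff (n - 1) := by
        rw [← modc hn (a * f) Zu hZud, hZu,
          conv hn (fun i => x.1 i ^ q) ((a * f) %ₘ (X ^ n - 1))]
        simp only [vecOf_apply]
      have e2 : ∑ i, x.2 i ^ q * (vecOf n (a * h * f + b * g)) i
          = (((a * h * f + b * g) * Zv) %ₘ (X ^ n - 1)).coeff (n - 1) := by
        rw [← modc hn (a * h * f + b * g) Zv hZvd, hZv,
          conv hn (fun i => x.2 i ^ q) ((a * h * f + b * g) %ₘ (X ^ n - 1))]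
        simp only [vecOf_apply]
      rw [e1, e2, ← coeff_add, ← add_modByMonic] at hy
      have e3 : (a * f) * Zu + (a * h * f + b * g) * Zv
          = a * (f * Zu + h * f * Zv) + b * (g * Zv) := by ring
      rwa [e3] at hy
    have h1 : (X ^ n - 1 : F[X]) ∣ f * Zu + h * f * Zv := by
      apply key hn
      intro a
      have := hcond a 0
      simpa using this
    have h2 : (X ^ n - 1 : F[X]) ∣ g * Zv := by
      apply key hn
      intro b
      have := hcond 0 b
      simpa using this
    have hmapN : (X ^ n - 1 : F[X]).map φ = X ^ n - 1 := by
      rw [Polynomial.map_sub, Polynomial.map_pow, map_X, Polynomial.map_one]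
    have hrefmap : ∀ (z : Fin n → F),
        (reflect (n - 1) (polyOfVec (fun i => z i ^ q))).map φ
          = reflect (n - 1) (polyOfVec z) := by
      intro z
      rw [reflect_map', map_polyOfVec]
      congr 2
      funext i
      rw [← hφ (z i), hφφ]
    have h2' : (X ^ n - 1 : F[X]) ∣ (g.map φ) * reflect (n - 1) (polyOfVec x.2) := by
      have hmap := map_dvd (Polynomial.mapRingHom φ) h2
      simp only [Polynomial.coe_mapRingHom, Polynomial.map_mul, hmapN] at hmap
      rwa [hZv, hrefmap x.2] at hmap
    have h1' : (X ^ n - 1 : F[X]) ∣ (f.map φ) * (reflect (n - 1) (polyOfVec x.1)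
        + (h.map φ) * reflect (n - 1) (polyOfVec x.2)) := by
      have hmap := map_dvd (Polynomial.mapRingHom φ) h1
      simp only [Polynomial.coe_mapRingHom, Polynomial.map_add, Polynomial.map_mul, hmapN] at hmap
      rw [hZu, hZv, hrefmap x.1, hrefmap x.2] at hmap
      have e4 : (f.map φ) * reflect (n - 1) (polyOfVec x.1)
          + (h.map φ) * (f.map φ) * reflect (n - 1) (polyOfVec x.2)
          = (f.map φ) * (reflect (n - 1) (polyOfVec x.1)
            + (h.map φ) * reflect (n - 1) (polyOfVec x.2)) := by ring
      rwa [e4] at hmap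
    have hmapgdvd : (g.map φ) ∣ (X ^ n - 1 : F[X]) := by
      rw [← hmapN]
      exact map_dvd (Polynomial.mapRingHom φ) hgdvd
    have hmapfdvd : (f.map φ) ∣ (X ^ n - 1 : F[X]) := by
      rw [← hmapN]
      exact map_dvd (Polynomial.mapRingHom φ) hfdvd
    have hGperp : perpPoly n (g.map φ) ∣ polyOfVec x.2 := by
      have hrd := refl_dvd hn (hg.map φ).ne_zero
        (natDegree_reflect_le (natDegree_polyOfVec_le hn x.2)) h2'
      rw [reflect_reflect'] at hrd
      exact pcancel hn (hg.map φ) hmapgdvd hrd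
    have hFperp : perpPoly n (f.map φ) ∣
        polyOfVec x.1 * X ^ (h.map φ).natDegree + reverse (h.map φ) * polyOfVec x.2 := by
      have hdadd : (reflect (n - 1) (polyOfVec x.1)
          + (h.map φ) * reflect (n - 1) (polyOfVec x.2)).natDegree
            ≤ (n - 1) + (h.map φ).natDegree := by
        apply natDegree_add_le_of_degree_le
        · exact le_trans (natDegree_reflect_le (natDegree_polyOfVec_le hn x.1)) (by omega)
        · exact le_trans natDegree_mul_le (by
            have := natDegree_reflect_le (natDegree_polyOfVec_le hn x.2)
            omega)
      have hrd := refl_dvd hn (hf.map φ).ne_zero hdadd h1'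
      have e4 : reflect ((n - 1) + (h.map φ).natDegree)
          (reflect (n - 1) (polyOfVec x.1) + (h.map φ) * reflect (n - 1) (polyOfVec x.2))
            = polyOfVec x.1 * X ^ (h.map φ).natDegree + reverse (h.map φ) * polyOfVec x.2 := by
        rw [reflect_add]
        congr 1
        · have e5 := reflect_mul (reflect (n - 1) (polyOfVec x.1)) (1 : F[X])
            (natDegree_reflect_le (natDegree_polyOfVec_le hn x.1))
            (by simp : (1 : F[X]).natDegree ≤ (h.map φ).natDegree)
          rw [mul_one] at e5
          rw [e5, reflect_reflect']
          congr 1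
          rw [← pow_zero (X : F[X]), reflect_monomial, revAt_le (Nat.zero_le _), Nat.sub_zero]
        · rw [add_comm (n - 1) (h.map φ).natDegree,
            reflect_mul (h.map φ) (reflect (n - 1) (polyOfVec x.2)) le_rfl
              (natDegree_reflect_le (natDegree_polyOfVec_le hn x.2)),
            reflect_reflect']
          rfl
      rw [e4] at hrd
      exact pcancel hn (hf.map φ) hmapfdvd hrd
    rw [polyQ_eq_map hq0 φ hφ g] at hd2
    rw [polyQ_eq_map hq0 φ hφ g, polyQ_eq_map hq0 φ hφ f] at hd3
    have hgpv : g ∣ polyOfVec x.2 := hd2.trans hGperp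
    have hgpuX : g ∣ polyOfVec x.1 * X ^ (h.map φ).natDegree := by
      have hsum : g ∣ polyOfVec x.1 * X ^ (h.map φ).natDegree
          + reverse (h.map φ) * polyOfVec x.2 := (hd2.trans hd3).trans hFperp
      have hsub := hsum.sub (hgpv.mul_left (reverse (h.map φ)))
      simpa using hsub
    have hg0 : g.coeff 0 ≠ 0 := by
      intro h0
      have hxd : (X : F[X]) ∣ X ^ n - 1 := (X_dvd_iff.2 h0).trans hgdvd
      rw [X_dvd_iff] at hxd
      simp [coeff_sub, coeff_one, coeff_X_pow, Ne.symm hn.ne'] at hxd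
    have hcop : IsCoprime (X ^ (h.map φ).natDegree : F[X]) g := by
      apply IsCoprime.pow_left
      exact (Polynomial.irreducible_X.coprime_iff_not_dvd).2
        (fun hdvd => hg0 (X_dvd_iff.1 hdvd))
    have hgpu : g ∣ polyOfVec x.1 := hcop.symm.dvd_of_dvd_mul_right hgpuX
    have hfpu : f ∣ polyOfVec x.1 := hd1.trans hgpu
    have hApu : f * ((polyOfVec x.1) /ₘ f) = polyOfVec x.1 := mul_divByMonic_cancel hf hfpu
    have hgdiff : g ∣ polyOfVec x.2 - polyOfVec x.1 * h :=
      dvd_sub hgpv (hgpu.mul_right h)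
    have hBpv : g * ((polyOfVec x.2 - polyOfVec x.1 * h) /ₘ g)
        = polyOfVec x.2 - polyOfVec x.1 * h := mul_divByMonic_cancel hg hgdiff
    refine ⟨(polyOfVec x.1) /ₘ f, (polyOfVec x.2 - polyOfVec x.1 * h) /ₘ g, ?_⟩
    have e5 : (polyOfVec x.1) /ₘ f * f = polyOfVec x.1 := by
      rw [mul_comm]; exact hApu
    have e6 : (polyOfVec x.1) /ₘ f * h * f
        + ((polyOfVec x.2 - polyOfVec x.1 * h) /ₘ g) * g = polyOfVec x.2 := by
      linear_combination h * hApu + hBpv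
    rw [e5, e6, vecOf_polyOfVec hn, vecOf_polyOfVec hn]
  · -- Part 3: minimum distance bound
    rintro v ⟨a, b, rfl⟩ hv
    have hd4 : dEucl n f g h ≤ cycDist n f + cycDist n (GCDMonoid.gcd (h * f) g) :=
      min_le_right _ _
    have hdEg : dEucl n f g h ≤ cycDist n g :=
      le_trans (le_trans (min_le_left _ _) (min_le_left _ _)) (min_le_left _ _)
    have hdEl : dEucl n f g h ≤ cycDist n (GCDMonoid.lcm f (g / GCDMonoid.gcd g h)) :=
      le_trans (min_le_left _ _) (min_le_right _ _)
    have hwt2 : hWt2 (vecOf n (a * f), vecOf n (a * h * f + b * g))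
        = hWt (vecOf n (a * f)) + hWt (vecOf n (a * h * f + b * g)) := rfl
    by_cases hA : vecOf n (a * f) = 0
    · -- first block zero
      have hB : vecOf n (a * h * f + b * g) ≠ 0 := by
        intro h0
        exact hv (Prod.ext hA h0)
      have hgdvd2 : g ∣ a * h * f + b * g := by
        refine dvd_add ?_ (dvd_mul_left g b)
        have h2 : g ∣ a * f := hgdvd.trans ((vecOf_eq_zero hn).1 hA)
        obtain ⟨e, he⟩ := h2
        exact ⟨e * h, by linear_combination h * he⟩
      have hc := cycDist_le hgdvd2 hB
      rw [ge_iff_le, hwt2, hA, hWt_zero]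
      omega
    · by_cases hB : vecOf n (a * h * f + b * g) = 0
      · -- second block zero
        have hNd : (X ^ n - 1 : F[X]) ∣ a * h * f + b * g := (vecOf_eq_zero hn).1 hB
        have hgahf : g ∣ a * h * f := by
          have h1 : g ∣ a * h * f + b * g := hgdvd.trans hNd
          simpa using h1.sub (dvd_mul_left g b)
        have hd0 : GCDMonoid.gcd g h ≠ 0 := fun h0 =>
          hg.ne_zero ((gcd_eq_zero_iff _ _).1 h0).1
        have hgdd : GCDMonoid.gcd g h * (g / GCDMonoid.gcd g h) = g :=
          EuclideanDomain.mul_div_cancel' hd0 (gcd_dvd_left g h)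
        have hhdd : GCDMonoid.gcd g h * (h / GCDMonoid.gcd g h) = h :=
          EuclideanDomain.mul_div_cancel' hd0 (gcd_dvd_right g h)
        have hcop : IsCoprime (g / GCDMonoid.gcd g h) (h / GCDMonoid.gcd g h) := by
          rw [← gcd_isUnit_iff]
          have hdd : GCDMonoid.gcd g h *
              GCDMonoid.gcd (g / GCDMonoid.gcd g h) (h / GCDMonoid.gcd g h) ∣
                GCDMonoid.gcd g h * 1 := by
            rw [mul_one]
            refine dvd_gcd ?_ ?_
            · exact (mul_dvd_mul_left _ (gcd_dvd_left _ _)).trans (dvd_of_eq hgdd)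
            · exact (mul_dvd_mul_left _ (gcd_dvd_right _ _)).trans (dvd_of_eq hhdd)
          exact isUnit_of_dvd_one ((mul_dvd_mul_iff_left hd0).1 hdd)
        have hg1 : (g / GCDMonoid.gcd g h) ∣ a * f := by
          have h1 : GCDMonoid.gcd g h * (g / GCDMonoid.gcd g h) ∣
              GCDMonoid.gcd g h * ((a * f) * (h / GCDMonoid.gcd g h)) := by
            rw [hgdd]
            have : a * h * f = GCDMonoid.gcd g h * (a * f * (h / GCDMonoid.gcd g h)) := by
              linear_combination (-(a * f)) * hhdd
            exact this ▸ hgahf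
          exact hcop.dvd_of_dvd_mul_right ((mul_dvd_mul_iff_left hd0).1 h1)
        have hlcm : GCDMonoid.lcm f (g / GCDMonoid.gcd g h) ∣ a * f :=
          lcm_dvd (dvd_mul_left f a) hg1
        have hc := cycDist_le hlcm hA
        rw [ge_iff_le, hwt2, hB, hWt_zero]
        omega
      · -- both nonzero
        have h1 : f ∣ a * f := dvd_mul_left f a
        have h2 : GCDMonoid.gcd (h * f) g ∣ a * h * f + b * g := by
          refine dvd_add ?_ ((gcd_dvd_right _ _).trans (dvd_mul_left g b))
          exact (gcd_dvd_left _ _).trans ⟨a, by ring⟩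
        have c1 := cycDist_le h1 hA
        have c2 := cycDist_le h2 hB
        rw [ge_iff_le, hwt2]
        omega

end
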